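/- Under Assumptions 1–4 there exists a constant C₈ such that, for all N, E[√n · sup_{(s,t)∈[0,T]²} |μ̂_N(t) − μ_N(t) − μ̂_N(s) + μ_N(s)|] ≤ C₈; consequently √n · E[sup_{t∈[0,T]} |μ̂_N(t) − μ_N(t)|] is bounded uniformly in N. -/

import Mathlib

open Finset MeasureTheory ProbabilityTheory Filter Topology

noncomputable section

/-- Expectation of `f` under a sampling design `p` on the population `{0, …, N-1}`. -/
def dExp (N : ℕ) (p : Finset ℕ → ℝ) (f : Finset ℕ → ℝ) : ℝ :=
  ∑ s ∈ (Finset.range N).powerset, p s * f s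

/-- Variance of `f` under the sampling design `p`. -/
def dVar (N : ℕ) (p : Finset ℕ → ℝ) (f : Finset ℕ → ℝ) : ℝ :=
  dExp N p (fun s => f s ^ 2) - dExp N p f ^ 2

/-- `p` is a fixed-size-`n` sampling design on the population `{0, …, N-1}`. -/
structure IsDesign (N n : ℕ) (p : Finset ℕ → ℝ) : Prop where
  nonneg : ∀ s, 0 ≤ p s
  sum_one : ∑ s ∈ (Finset.range N).powerset, p s = 1
  supp : ∀ s, p s ≠ 0 → s ⊆ Finset.range N ∧ s.card = n

/-- First-order inclusion probability `π_k`. -/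
def pi1 (N : ℕ) (p : Finset ℕ → ℝ) (k : ℕ) : ℝ :=
  dExp N p fun s => if k ∈ s then 1 else 0

/-- Second-order inclusion probability `π_{kl}` (it equals `π_k` on the diagonal). -/
def pi2 (N : ℕ) (p : Finset ℕ → ℝ) (k l : ℕ) : ℝ :=
  dExp N p fun s => if k ∈ s ∧ l ∈ s then 1 else 0

/-- `Δ_{kl} = π_{kl} - π_k π_l`; on the diagonal it equals `π_k (1 - π_k)`. -/
def Delta (N : ℕ) (p : Finset ℕ → ℝ) (k l : ℕ) : ℝ :=
  pi2 N p k l - pi1 N p k * pi1 N p l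

/-- Sample membership indicator `I_k`. -/
def ind (k : ℕ) (s : Finset ℕ) : ℝ := if k ∈ s then 1 else 0

/-- Population mean trajectory `μ_N`. -/
def popMean (N : ℕ) (Y : ℕ → ℝ → ℝ) (t : ℝ) : ℝ :=
  (N : ℝ)⁻¹ * ∑ k ∈ Finset.range N, Y k t

/-- Horvitz–Thompson estimator of the mean curve computed from the sample `s`. -/
def htMean (N : ℕ) (p : Finset ℕ → ℝ) (Y : ℕ → ℝ → ℝ) (s : Finset ℕ) (t : ℝ) : ℝ :=
  (N : ℝ)⁻¹ * ∑ k ∈ s, Y k t / pi1 N p k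

/-- Covariance function `γ_N(u,v)` of the Horvitz–Thompson estimator under the design. -/
def htCov (N : ℕ) (p : Finset ℕ → ℝ) (Y : ℕ → ℝ → ℝ) (u v : ℝ) : ℝ :=
  dExp N p (fun s => htMean N p Y s u * htMean N p Y s v) -
    dExp N p (fun s => htMean N p Y s u) * dExp N p (fun s => htMean N p Y s v)

/-- Horvitz–Thompson covariance estimator `γ̂(u,v)`. -/
def htCovEst (N : ℕ) (p : Finset ℕ → ℝ) (Y : ℕ → ℝ → ℝ) (s : Finset ℕ) (u v : ℝ) : ℝ :=
  ((N : ℝ) ^ 2)⁻¹ * ∑ k ∈ s, ∑ l ∈ s,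
    Y k u / pi1 N p k * (Y l v / pi1 N p l) * (Delta N p k l / pi2 N p k l)

/-- Mesh (largest gap) of a discretization grid `pts` with `d` subintervals. -/
def meshR (d : ℕ) (hd : 0 < d) (pts : Fin (d + 1) → ℝ) : ℝ :=
  Finset.univ.sup' (⟨⟨0, hd⟩, Finset.mem_univ _⟩ : (Finset.univ : Finset (Fin d)).Nonempty)
    fun i : Fin d => |pts i.succ - pts i.castSucc|


section Aux
variable {N n : ℕ} {p : Finset ℕ → ℝ}

lemma dExp_congr {f g : Finset ℕ → ℝ} (h : ∀ s ∈ (Finset.range N).powerset, f s = g s) :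
    dExp N p f = dExp N p g :=
  Finset.sum_congr rfl fun s hs => by rw [h s hs]

lemma dExp_add (f g : Finset ℕ → ℝ) :
    dExp N p (fun s => f s + g s) = dExp N p f + dExp N p g := by
  simp [dExp, mul_add, Finset.sum_add_distrib]

lemma dExp_const_mul (c : ℝ) (f : Finset ℕ → ℝ) :
    dExp N p (fun s => c * f s) = c * dExp N p f := by
  simp only [dExp, Finset.mul_sum]
  exact Finset.sum_congr rfl fun s _ => by ring

lemma dExp_sum {ι : Type*} (A : Finset ι) (F : ι → Finset ℕ → ℝ) :
    dExp N p (fun s => ∑ i ∈ A, F i s) = ∑ i ∈ A, dExp N p (F i) := by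
  simp only [dExp, Finset.mul_sum]
  exact Finset.sum_comm

lemma dExp_const (hd : IsDesign N n p) (c : ℝ) : dExp N p (fun _ => c) = c := by
  simp [dExp, ← Finset.sum_mul, hd.sum_one]

lemma dExp_mono (hd : IsDesign N n p) {f g : Finset ℕ → ℝ}
    (h : ∀ s ∈ (Finset.range N).powerset, p s ≠ 0 → f s ≤ g s) :
    dExp N p f ≤ dExp N p g :=
  Finset.sum_le_sum fun s hs => by
    rcases eq_or_ne (p s) 0 with h0 | h0
    · simp [h0]
    · exact mul_le_mul_of_nonneg_left (h s hs h0) (hd.nonneg s)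

lemma dExp_nonneg (hd : IsDesign N n p) {f : Finset ℕ → ℝ}
    (h : ∀ s ∈ (Finset.range N).powerset, p s ≠ 0 → 0 ≤ f s) : 0 ≤ dExp N p f := by
  have : dExp N p (fun _ => (0:ℝ)) ≤ dExp N p f := dExp_mono hd h
  simpa [dExp] using this

lemma dExp_abs_le_sqrt (hd : IsDesign N n p) (f : Finset ℕ → ℝ) :
    dExp N p (fun s => |f s|) ≤ Real.sqrt (dExp N p (fun s => f s ^ 2)) := by
  have hS : 0 ≤ dExp N p (fun s => f s ^ 2) :=
    dExp_nonneg hd fun s _ _ => sq_nonneg _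
  have habs : 0 ≤ dExp N p (fun s => |f s|) :=
    dExp_nonneg hd fun s _ _ => abs_nonneg _
  rw [Real.le_sqrt habs hS]
  calc dExp N p (fun s => |f s|) ^ 2
      = (∑ s ∈ (Finset.range N).powerset, Real.sqrt (p s) * (Real.sqrt (p s) * |f s|)) ^ 2 := by
        unfold dExp
        congr 1
        refine Finset.sum_congr rfl fun s _ => ?_
        rw [← mul_assoc, Real.mul_self_sqrt (hd.nonneg s)]
    _ ≤ (∑ s ∈ (Finset.range N).powerset, Real.sqrt (p s) ^ 2) *
        ∑ s ∈ (Finset.range N).powerset, (Real.sqrt (p s) * |f s|) ^ 2 :=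
        Finset.sum_mul_sq_le_sq_mul_sq _ _ _
    _ = dExp N p (fun s => f s ^ 2) := by
        have h1 : ∑ s ∈ (Finset.range N).powerset, Real.sqrt (p s) ^ 2 = 1 := by
          rw [← hd.sum_one]
          exact Finset.sum_congr rfl fun s _ => Real.sq_sqrt (hd.nonneg s)
        rw [h1, one_mul]
        unfold dExp
        refine Finset.sum_congr rfl fun s _ => ?_
        rw [mul_pow, Real.sq_sqrt (hd.nonneg s), sq_abs]

end Aux
section Aux2
variable {N n : ℕ} {p : Finset ℕ → ℝ}

lemma dExp_ind (k : ℕ) : dExp N p (ind k) = pi1 N p k := rfl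

lemma pi1_nonneg (hd : IsDesign N n p) (k : ℕ) : 0 ≤ pi1 N p k :=
  dExp_nonneg hd fun s _ _ => by positivity

lemma pi1_le_one (hd : IsDesign N n p) (k : ℕ) : pi1 N p k ≤ 1 := by
  have : dExp N p (fun s => if k ∈ s then (1:ℝ) else 0) ≤ dExp N p (fun _ => (1:ℝ)) :=
    dExp_mono hd fun s _ _ => by split <;> norm_num
  simpa [pi1, dExp_const hd] using this

lemma dExp_ind_mul_ind (k l : ℕ) :
    dExp N p (fun s => ind k s * ind l s) = pi2 N p k l := by
  unfold pi2
  refine dExp_congr fun s _ => ?_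
  unfold ind
  by_cases hk : k ∈ s <;> by_cases hl : l ∈ s <;> simp [hk, hl]

/-- Expectation of a product of centered indicators equals `Δ`. -/
lemma dExp_centered (hd : IsDesign N n p) (k l : ℕ) :
    dExp N p (fun s => (ind k s - pi1 N p k) * (ind l s - pi1 N p l)) = Delta N p k l := by
  have expand : ∀ s : Finset ℕ,
      (ind k s - pi1 N p k) * (ind l s - pi1 N p l) =
        ind k s * ind l s + ((- pi1 N p l) * ind k s +
          ((- pi1 N p k) * ind l s + pi1 N p k * pi1 N p l)) := by
    intro s; ring
  calc dExp N p (fun s => (ind k s - pi1 N p k) * (ind l s - pi1 N p l))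
      = dExp N p (fun s => ind k s * ind l s) +
        (dExp N p (fun s => (- pi1 N p l) * ind k s) +
        (dExp N p (fun s => (- pi1 N p k) * ind l s) +
         dExp N p (fun _ => pi1 N p k * pi1 N p l))) := by
        rw [← dExp_add, ← dExp_add, ← dExp_add]
        exact dExp_congr fun s _ => expand s
    _ = Delta N p k l := by
        rw [dExp_const_mul, dExp_const_mul, dExp_ind, dExp_ind, dExp_ind_mul_ind,
          dExp_const hd]
        unfold Delta; ring

/-- Second moment of a centered linear statistic. -/
lemma dExp_sq_sum (hd : IsDesign N n p) (c : ℕ → ℝ) :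
    dExp N p (fun sam => (∑ k ∈ Finset.range N, c k * (ind k sam - pi1 N p k)) ^ 2)
      = ∑ k ∈ Finset.range N, ∑ l ∈ Finset.range N, c k * c l * Delta N p k l := by
  have expand : ∀ sam : Finset ℕ,
      (∑ k ∈ Finset.range N, c k * (ind k sam - pi1 N p k)) ^ 2 =
      ∑ k ∈ Finset.range N, ∑ l ∈ Finset.range N,
        (c k * c l) * ((ind k sam - pi1 N p k) * (ind l sam - pi1 N p l)) := by
    intro sam
    rw [sq, Finset.sum_mul_sum]
    exact Finset.sum_congr rfl fun k _ => Finset.sum_congr rfl fun l _ => by ring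
  calc dExp N p _ = ∑ k ∈ Finset.range N, ∑ l ∈ Finset.range N,
        dExp N p (fun sam => (c k * c l) *
          ((ind k sam - pi1 N p k) * (ind l sam - pi1 N p l))) := by
        rw [dExp_congr fun sam _ => expand sam, dExp_sum]
        exact Finset.sum_congr rfl fun k _ => by rw [dExp_sum]
    _ = _ := by
        refine Finset.sum_congr rfl fun k _ => Finset.sum_congr rfl fun l _ => ?_
        rw [dExp_const_mul, dExp_centered hd]

end Aux2
section Aux3
variable {N n : ℕ} {p : Finset ℕ → ℝ}

/-- Representation of the centered HT estimator as a linear statistic. -/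
lemma ht_repr (hπ : ∀ k ∈ Finset.range N, pi1 N p k ≠ 0) (Y : ℕ → ℝ → ℝ)
    {sam : Finset ℕ} (hsam : sam ⊆ Finset.range N) (t : ℝ) :
    htMean N p Y sam t - popMean N Y t =
      (N : ℝ)⁻¹ * ∑ k ∈ Finset.range N,
        (Y k t / pi1 N p k) * (ind k sam - pi1 N p k) := by
  unfold htMean popMean
  rw [← mul_sub]
  congr 1
  have h1 : ∑ k ∈ sam, Y k t / pi1 N p k
      = ∑ k ∈ Finset.range N, (Y k t / pi1 N p k) * ind k sam := by
    unfold ind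
    simp only [mul_ite, mul_one, mul_zero]
    rw [Finset.sum_ite_mem, Finset.inter_comm, Finset.inter_eq_left.mpr hsam]
  have h2 : ∑ k ∈ Finset.range N, Y k t
      = ∑ k ∈ Finset.range N, (Y k t / pi1 N p k) * pi1 N p k := by
    refine Finset.sum_congr rfl fun k hk => ?_
    field_simp [hπ k hk]
  rw [h1, h2, ← Finset.sum_sub_distrib]
  exact Finset.sum_congr rfl fun k _ => by ring

end Aux3
section Aux4
variable {N n : ℕ} {p : Finset ℕ → ℝ} {lam C₁ : ℝ}

/-- `n ≤ N` for a fixed-size design. -/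
lemma design_n_le_N (hd : IsDesign N n p) : n ≤ N := by
  have h1 : ∑ s ∈ (Finset.range N).powerset, p s ≠ 0 := by rw [hd.sum_one]; norm_num
  obtain ⟨s0, hs0, hps0⟩ := Finset.exists_ne_zero_of_sum_ne_zero h1
  obtain ⟨hsub, hcard⟩ := hd.supp s0 hps0
  calc n = s0.card := hcard.symm
    _ ≤ (Finset.range N).card := Finset.card_le_card hsub
    _ = N := Finset.card_range N

lemma delta_diag_mem (hd : IsDesign N n p) (k : ℕ) :
    0 ≤ Delta N p k k ∧ Delta N p k k ≤ 1 := by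
  have e : pi2 N p k k = pi1 N p k := by
    unfold pi2 pi1; exact dExp_congr fun s _ => by by_cases h : k ∈ s <;> simp [h]
  have h0 := pi1_nonneg hd k
  have h1 := pi1_le_one hd k
  unfold Delta; rw [e]; constructor <;> nlinarith

/-- Core variance bound. -/
lemma var_bound (hd : IsDesign N n p) (hlam : 0 < lam) (hC₁ : 0 < C₁)
    (hA2a : ∀ k ∈ Finset.range N, lam ≤ pi1 N p k)
    (hA2c : ∀ k ∈ Finset.range N, ∀ l ∈ Finset.range N, k ≠ l →
      (n : ℝ) * |Delta N p k l| ≤ C₁)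
    (z : ℕ → ℝ) :
    (n : ℝ) * dExp N p (fun sam => ((N : ℝ)⁻¹ *
        ∑ k ∈ Finset.range N, (z k / pi1 N p k) * (ind k sam - pi1 N p k)) ^ 2)
      ≤ ((1 + C₁) / lam ^ 2) * ((N : ℝ)⁻¹ * ∑ k ∈ Finset.range N, z k ^ 2) := by
  rcases Nat.eq_zero_or_pos N with hN0 | hNpos
  · subst hN0
    simp [dExp]
  have hN : (0:ℝ) < N := by exact_mod_cast hNpos
  set R := Finset.range N
  set c : ℕ → ℝ := fun k => z k / pi1 N p k with hc
  have hrw : dExp N p (fun sam => ((N : ℝ)⁻¹ *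
        ∑ k ∈ R, c k * (ind k sam - pi1 N p k)) ^ 2)
      = ((N:ℝ)⁻¹)^2 * ∑ k ∈ R, ∑ l ∈ R, c k * c l * Delta N p k l := by
    rw [← dExp_sq_sum hd c, ← dExp_const_mul]
    exact dExp_congr fun sam _ => by ring
  rw [hrw]
  have hcsq : ∀ k ∈ R, c k ^ 2 ≤ z k ^ 2 / lam ^ 2 := by
    intro k hk
    have hπk := hA2a k hk
    have h0 : (0:ℝ) < pi1 N p k := lt_of_lt_of_le hlam hπk
    rw [hc]
    simp only [div_pow]
    exact div_le_div_of_nonneg_left (sq_nonneg _) (by positivity) (by nlinarith)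
  -- termwise bound for the double sum
  have hterm : ∀ k ∈ R, ∀ l ∈ R,
      (n : ℝ) * (c k * c l * Delta N p k l) ≤
        (if k = l then (N:ℝ) * c k ^ 2 else 0) + C₁ * ((c k ^ 2 + c l ^ 2) / 2) := by
    intro k hk l hl
    by_cases hkl : k = l
    · subst hkl
      simp only [eq_self_iff_true, if_true]
      obtain ⟨hΔ0, hΔ1⟩ := delta_diag_mem hd k
      have hn : (n:ℝ) ≤ (N:ℝ) := by exact_mod_cast design_n_le_N hd
      have hnn : (0:ℝ) ≤ (n:ℝ) := Nat.cast_nonneg n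
      have key : (n:ℝ) * (c k * c k * Delta N p k k) ≤ (N:ℝ) * c k ^ 2 := by
        have h1 : (n:ℝ) * Delta N p k k ≤ (N:ℝ) := by nlinarith
        calc (n:ℝ) * (c k * c k * Delta N p k k)
            = ((n:ℝ) * Delta N p k k) * c k ^ 2 := by ring
          _ ≤ (N:ℝ) * c k ^ 2 := mul_le_mul_of_nonneg_right h1 (sq_nonneg _)
      nlinarith [sq_nonneg (c k), key]
    · simp only [if_neg hkl]
      have h1 := hA2c k hk l hl hkl
      have h2 : (n : ℝ) * (c k * c l * Delta N p k l)
          ≤ |c k| * |c l| * ((n:ℝ) * |Delta N p k l|) := by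
        calc (n : ℝ) * (c k * c l * Delta N p k l)
            ≤ |(n : ℝ) * (c k * c l * Delta N p k l)| := le_abs_self _
          _ = |c k| * |c l| * ((n:ℝ) * |Delta N p k l|) := by
              rw [abs_mul, abs_mul, abs_mul, Nat.abs_cast]; ring
      have h3 : |c k| * |c l| * ((n:ℝ) * |Delta N p k l|) ≤ |c k| * |c l| * C₁ :=
        mul_le_mul_of_nonneg_left h1 (by positivity)
      have h4 : |c k| * |c l| ≤ (c k ^ 2 + c l ^ 2) / 2 := by
        nlinarith [sq_nonneg (|c k| - |c l|), sq_abs (c k), sq_abs (c l)]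
      nlinarith [mul_le_mul_of_nonneg_right h4 (le_of_lt hC₁)]
  have hsum : (n : ℝ) * ∑ k ∈ R, ∑ l ∈ R, c k * c l * Delta N p k l
      ≤ (1 + C₁) * ((N:ℝ) * ∑ k ∈ R, c k ^ 2) := by
    rw [Finset.mul_sum]
    have step1 : ∑ k ∈ R, (n:ℝ) * ∑ l ∈ R, c k * c l * Delta N p k l
        ≤ ∑ k ∈ R, ∑ l ∈ R,
            ((if k = l then (N:ℝ) * c k ^ 2 else 0) + C₁ * ((c k ^ 2 + c l ^ 2) / 2)) := by
      refine Finset.sum_le_sum fun k hk => ?_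
      rw [Finset.mul_sum]
      exact Finset.sum_le_sum fun l hl => hterm k hk l hl
    refine le_trans step1 ?_
    have e1 : ∀ k ∈ R, ∑ l ∈ R,
        ((if k = l then (N:ℝ) * c k ^ 2 else 0) + C₁ * ((c k ^ 2 + c l ^ 2) / 2))
        = (N:ℝ) * c k ^ 2 + (C₁ * ((N:ℝ) * c k ^ 2 + ∑ l ∈ R, c l ^ 2) / 2) := by
      intro k hk
      rw [Finset.sum_add_distrib, Finset.sum_ite_eq R k (fun _ => (N:ℝ) * c k ^ 2), if_pos hk]
      congr 1
      rw [← Finset.mul_sum]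
      have : ∑ l ∈ R, (c k ^ 2 + c l ^ 2) = (N:ℝ) * c k ^ 2 + ∑ l ∈ R, c l ^ 2 := by
        rw [Finset.sum_add_distrib, Finset.sum_const, Finset.card_range, nsmul_eq_mul]
      rw [← Finset.sum_div, this, mul_div_assoc]
    rw [Finset.sum_congr rfl e1, Finset.sum_add_distrib]
    have e2 : ∑ k ∈ R, (N:ℝ) * c k ^ 2 = (N:ℝ) * ∑ k ∈ R, c k ^ 2 := by
      rw [Finset.mul_sum]
    have e3 : ∑ k ∈ R, (C₁ * ((N:ℝ) * c k ^ 2 + ∑ l ∈ R, c l ^ 2) / 2)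
        = C₁ * ((N:ℝ) * ∑ k ∈ R, c k ^ 2 + (N:ℝ) * ∑ l ∈ R, c l ^ 2) / 2 := by
      rw [← Finset.sum_div, ← Finset.mul_sum]
      congr 2
      rw [Finset.sum_add_distrib, ← Finset.mul_sum, Finset.sum_const, Finset.card_range,
        nsmul_eq_mul]
    rw [e2, e3]
    nlinarith [Finset.sum_nonneg fun k (_ : k ∈ R) => sq_nonneg (c k)]
  have hfinal : ∑ k ∈ R, c k ^ 2 ≤ (∑ k ∈ R, z k ^ 2) / lam ^ 2 := by
    rw [Finset.sum_div]
    exact Finset.sum_le_sum hcsq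
  have hΔsum : (0:ℝ) ≤ (1 + C₁) := by linarith
  have hzsum : (0:ℝ) ≤ ∑ k ∈ R, z k ^ 2 :=
    Finset.sum_nonneg fun k _ => sq_nonneg _
  calc (n : ℝ) * (((N:ℝ)⁻¹)^2 * ∑ k ∈ R, ∑ l ∈ R, c k * c l * Delta N p k l)
      = ((N:ℝ)⁻¹)^2 * ((n:ℝ) * ∑ k ∈ R, ∑ l ∈ R, c k * c l * Delta N p k l) := by ring
    _ ≤ ((N:ℝ)⁻¹)^2 * ((1 + C₁) * ((N:ℝ) * ∑ k ∈ R, c k ^ 2)) := by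
        exact mul_le_mul_of_nonneg_left hsum (by positivity)
    _ ≤ ((N:ℝ)⁻¹)^2 * ((1 + C₁) * ((N:ℝ) * ((∑ k ∈ R, z k ^ 2) / lam ^ 2))) := by
        refine mul_le_mul_of_nonneg_left (mul_le_mul_of_nonneg_left
          (mul_le_mul_of_nonneg_left hfinal (le_of_lt hN)) hΔsum) (by positivity)
    _ = ((1 + C₁) / lam ^ 2) * ((N : ℝ)⁻¹ * ∑ k ∈ R, z k ^ 2) := by
        field_simp

end Aux4
section Aux5
variable {N n : ℕ} {p : Finset ℕ → ℝ} {lam : ℝ}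

lemma abs_ind_sub_le (hd : IsDesign N n p) (k : ℕ) (sam : Finset ℕ) :
    |ind k sam - pi1 N p k| ≤ 1 := by
  have h0 := pi1_nonneg hd k
  have h1 := pi1_le_one hd k
  unfold ind
  by_cases h : k ∈ sam <;> simp [h] <;> rw [abs_le] <;> constructor <;> linarith

lemma mean_abs_le_sqrt (z : ℕ → ℝ) :
    (N : ℝ)⁻¹ * ∑ k ∈ Finset.range N, |z k| ≤
      Real.sqrt ((N : ℝ)⁻¹ * ∑ k ∈ Finset.range N, z k ^ 2) := by
  have hQ : (0:ℝ) ≤ (N : ℝ)⁻¹ * ∑ k ∈ Finset.range N, z k ^ 2 := by positivity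
  have hL : (0:ℝ) ≤ (N : ℝ)⁻¹ * ∑ k ∈ Finset.range N, |z k| := by positivity
  rw [Real.le_sqrt hL hQ]
  have cs : (∑ k ∈ Finset.range N, |z k|) ^ 2 ≤
      (N:ℝ) * ∑ k ∈ Finset.range N, z k ^ 2 := by
    have := Finset.sum_mul_sq_le_sq_mul_sq (Finset.range N)
      (fun _ => (1:ℝ)) (fun k => |z k|)
    simp only [one_mul, one_pow, Finset.sum_const, Finset.card_range, nsmul_eq_mul,
      mul_one, sq_abs] at this
    exact this
  rcases Nat.eq_zero_or_pos N with h0 | hpos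
  · subst h0; simp
  have hN : (0:ℝ) < N := by exact_mod_cast hpos
  calc ((N : ℝ)⁻¹ * ∑ k ∈ Finset.range N, |z k|) ^ 2
      = ((N:ℝ)⁻¹)^2 * (∑ k ∈ Finset.range N, |z k|) ^ 2 := by ring
    _ ≤ ((N:ℝ)⁻¹)^2 * ((N:ℝ) * ∑ k ∈ Finset.range N, z k ^ 2) :=
        mul_le_mul_of_nonneg_left cs (by positivity)
    _ = (N : ℝ)⁻¹ * ∑ k ∈ Finset.range N, z k ^ 2 := by
        field_simp

lemma det_bound (hd : IsDesign N n p) (hlam : 0 < lam)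
    (hA2a : ∀ k ∈ Finset.range N, lam ≤ pi1 N p k) (z : ℕ → ℝ) (sam : Finset ℕ) :
    |(N : ℝ)⁻¹ * ∑ k ∈ Finset.range N, (z k / pi1 N p k) * (ind k sam - pi1 N p k)|
      ≤ lam⁻¹ * Real.sqrt ((N : ℝ)⁻¹ * ∑ k ∈ Finset.range N, z k ^ 2) := by
  have h1 : |(N : ℝ)⁻¹ * ∑ k ∈ Finset.range N, (z k / pi1 N p k) * (ind k sam - pi1 N p k)|
      ≤ (N : ℝ)⁻¹ * ∑ k ∈ Finset.range N, |z k| * lam⁻¹ := by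
    rw [abs_mul, abs_of_nonneg (by positivity : (0:ℝ) ≤ (N:ℝ)⁻¹)]
    refine mul_le_mul_of_nonneg_left ?_ (by positivity)
    refine le_trans (Finset.abs_sum_le_sum_abs _ _) (Finset.sum_le_sum fun k hk => ?_)
    rw [abs_mul, abs_div]
    have hπ : lam ≤ pi1 N p k := hA2a k hk
    have hπpos : (0:ℝ) < pi1 N p k := lt_of_lt_of_le hlam hπ
    have e1 : |z k| / |pi1 N p k| ≤ |z k| * lam⁻¹ := by
      rw [abs_of_pos hπpos, div_eq_mul_inv]
      exact mul_le_mul_of_nonneg_left (by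
        exact inv_anti₀ hlam hπ) (abs_nonneg _)
    calc |z k| / |pi1 N p k| * |ind k sam - pi1 N p k|
        ≤ |z k| / |pi1 N p k| * 1 :=
          mul_le_mul_of_nonneg_left (abs_ind_sub_le hd k sam) (by positivity)
      _ = |z k| / |pi1 N p k| := mul_one _
      _ ≤ |z k| * lam⁻¹ := e1
  refine le_trans h1 ?_
  have : (N : ℝ)⁻¹ * ∑ k ∈ Finset.range N, |z k| * lam⁻¹
      = lam⁻¹ * ((N : ℝ)⁻¹ * ∑ k ∈ Finset.range N, |z k|) := by
    rw [← Finset.sum_mul]; ring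
  rw [this]
  exact mul_le_mul_of_nonneg_left (mean_abs_le_sqrt z) (by positivity)

end Aux5
section Grid

/-- Dyadic grid point `j·T/2^m`. -/
def gridPt (T : ℝ) (m j : ℕ) : ℝ := (j : ℝ) * T / 2 ^ m

/-- Index of the dyadic approximation of `t` at level `m`. -/
def gridIdx (T : ℝ) (m : ℕ) (t : ℝ) : ℕ := ⌊t * 2 ^ m / T⌋₊

variable {T t : ℝ} {m j : ℕ}

lemma gridIdx_le (hT : 0 < T) (ht : t ∈ Set.Icc 0 T) : gridIdx T m t ≤ 2 ^ m := by
  have hx : t * 2 ^ m / T ≤ ((2 ^ m : ℕ) : ℝ) := by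
    push_cast
    rw [div_le_iff₀ hT]
    have := ht.2
    nlinarith [pow_pos (by norm_num : (0:ℝ) < 2) m]
  calc gridIdx T m t ≤ ⌊((2 ^ m : ℕ) : ℝ)⌋₊ := Nat.floor_le_floor hx
    _ = 2 ^ m := Nat.floor_natCast _

lemma gridPt_mem (hT : 0 < T) (hj : j ≤ 2 ^ m) : gridPt T m j ∈ Set.Icc 0 T := by
  unfold gridPt
  constructor
  · positivity
  · rw [div_le_iff₀ (by positivity)]
    have : (j : ℝ) ≤ (2:ℝ) ^ m := by exact_mod_cast hj
    nlinarith

lemma gridIdx_approx (hT : 0 < T) (ht : t ∈ Set.Icc 0 T) :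
    |t - gridPt T m (gridIdx T m t)| ≤ T / 2 ^ m := by
  have h2 : (0:ℝ) < 2 ^ m := by positivity
  have hx0 : 0 ≤ t * 2 ^ m / T := by
    have := ht.1; positivity
  have hfl : (↑(gridIdx T m t) : ℝ) ≤ t * 2 ^ m / T := Nat.floor_le hx0
  have hfu : t * 2 ^ m / T < (↑(gridIdx T m t) : ℝ) + 1 := Nat.lt_floor_add_one _
  have hfl' : (↑(gridIdx T m t) : ℝ) * T ≤ t * 2 ^ m := (le_div_iff₀ hT).mp hfl
  have hfu' : t * 2 ^ m < ((↑(gridIdx T m t) : ℝ) + 1) * T := (div_lt_iff₀ hT).mp hfu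
  unfold gridPt
  have e : t - (↑(gridIdx T m t) : ℝ) * T / 2 ^ m
      = (t * 2 ^ m - (↑(gridIdx T m t) : ℝ) * T) / 2 ^ m := by
    field_simp
  rw [e, abs_le]
  constructor
  · have : (0:ℝ) ≤ (t * 2 ^ m - (↑(gridIdx T m t) : ℝ) * T) / 2 ^ m := by
      apply div_nonneg (by linarith) (le_of_lt h2)
    have hTm : (0:ℝ) ≤ T / 2 ^ m := by positivity
    linarith
  · rw [div_le_div_iff_of_pos_right h2]
    nlinarith

lemma gridIdx_succ (hT : 0 < T) : gridIdx T m t = gridIdx T (m + 1) t / 2 := by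
  unfold gridIdx
  rw [show t * 2 ^ m / T = t * 2 ^ (m + 1) / T / (2 : ℕ) by push_cast; ring]
  exact Nat.floor_div_natCast (t * 2 ^ (m + 1) / T) 2

lemma gridPt_pair (hT : 0 < T) :
    |gridPt T (m + 1) j - gridPt T m (j / 2)| ≤ T / 2 ^ (m + 1) := by
  have hj : (j : ℝ) = 2 * ((j / 2 : ℕ) : ℝ) + ((j % 2 : ℕ) : ℝ) := by
    exact_mod_cast (Nat.div_add_mod j 2).symm.trans (by ring_nf)
  have hmod : ((j % 2 : ℕ) : ℝ) ≤ 1 := by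
    have : j % 2 < 2 := Nat.mod_lt _ (by norm_num)
    exact_mod_cast Nat.lt_succ_iff.mp this
  have hmod0 : (0:ℝ) ≤ ((j % 2 : ℕ) : ℝ) := Nat.cast_nonneg _
  unfold gridPt
  have e : (j : ℝ) * T / 2 ^ (m + 1) - ((j / 2 : ℕ) : ℝ) * T / 2 ^ m
      = ((j % 2 : ℕ) : ℝ) * T / 2 ^ (m + 1) := by
    rw [hj]; ring
  rw [e, abs_of_nonneg (by positivity)]
  rw [div_le_div_iff_of_pos_right (by positivity)]
  nlinarith [mul_le_mul_of_nonneg_right hmod (le_of_lt hT)]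

lemma gridPt_zero_cases (hT : 0 < T) (ht : t ∈ Set.Icc 0 T) :
    gridPt T 0 (gridIdx T 0 t) = 0 ∨ gridPt T 0 (gridIdx T 0 t) = T := by
  have h := gridIdx_le (m := 0) hT ht
  interval_cases h' : gridIdx T 0 t
  · left; simp [gridPt]
  · right; simp [gridPt]

end Grid
section Aux7

lemma sqrt_nat_le_two_pow_rpow {β : ℝ} (hβ : 1 / 2 < β) (n : ℕ) :
    Real.sqrt n ≤ ((2:ℝ) ^ n) ^ β := by
  have h1 : (n : ℝ) ≤ (2:ℝ) ^ n := by
    exact_mod_cast (Nat.lt_two_pow_self (n := n)).le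
  have h2 : Real.sqrt n ≤ Real.sqrt ((2:ℝ) ^ n) := Real.sqrt_le_sqrt h1
  have h3 : Real.sqrt ((2:ℝ) ^ n) = ((2:ℝ) ^ n) ^ (1/2 : ℝ) := Real.sqrt_eq_rpow _
  have h4 : ((2:ℝ) ^ n) ^ (1/2 : ℝ) ≤ ((2:ℝ) ^ n) ^ β :=
    Real.rpow_le_rpow_of_exponent_le (one_le_pow₀ (by norm_num)) (le_of_lt hβ)
  linarith [h2, h4, h3 ▸ h2]

lemma sup'_abs_le_sqrt_sum {ι : Type*} {A : Finset ι} (hA : A.Nonempty) (D : ι → ℝ) :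
    (A.sup' hA fun j => |D j|) ≤ Real.sqrt (∑ j ∈ A, D j ^ 2) := by
  obtain ⟨j₀, hj₀, he⟩ := Finset.exists_mem_eq_sup' hA fun j => |D j|
  rw [he]
  have h1 : |D j₀| = Real.sqrt (D j₀ ^ 2) := (Real.sqrt_sq_eq_abs _).symm
  rw [h1]
  exact Real.sqrt_le_sqrt (Finset.single_le_sum (fun j _ => sq_nonneg (D j)) hj₀)

lemma geom_tail_sum_le {r : ℝ} (h0 : 0 ≤ r) (h1 : r < 1) (M : ℕ) :
    ∑ m ∈ Finset.range M, r ^ (m + 1) ≤ 1 / (1 - r) := by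
  have key : ∑ m ∈ Finset.range M, r ^ m ≤ 1 / (1 - r) := by
    rcases eq_or_ne r 1 with h | h
    · linarith
    · rw [geom_sum_eq h]
      have hr : (0:ℝ) < 1 - r := by linarith
      have e : (r ^ M - 1) / (r - 1) = (1 - r ^ M) / (1 - r) := by
        rw [← neg_div_neg_eq]; ring_nf
      rw [e, div_le_div_iff_of_pos_right hr]
      have : (0:ℝ) ≤ r ^ M := pow_nonneg h0 M
      linarith
  refine le_trans (Finset.sum_le_sum fun m _ => ?_) key
  exact pow_le_pow_of_le_one h0 (le_of_lt h1) (Nat.le_succ m)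

lemma chain_scale_bound {β T : ℝ} (hβ : 1 / 2 < β) (hT : 0 < T) (s : ℕ) :
    Real.sqrt ((2 ^ s + 1 : ℕ)) * (T / 2 ^ s) ^ β ≤
      Real.sqrt 2 * T ^ β * ((2:ℝ) ^ ((1:ℝ)/2 - β)) ^ s := by
  have hβ0 : (0:ℝ) ≤ β := by linarith
  have h2s : (0:ℝ) < (2:ℝ) ^ s := by positivity
  -- √(2^s+1) ≤ √2 · (2^s)^(1/2)
  have h1 : Real.sqrt ((2 ^ s + 1 : ℕ)) ≤ Real.sqrt 2 * ((2:ℝ) ^ s) ^ ((1:ℝ)/2) := by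
    have e1 : ((2 ^ s + 1 : ℕ) : ℝ) ≤ 2 * (2:ℝ) ^ s := by
      push_cast
      nlinarith [one_le_pow₀ (by norm_num : (1:ℝ) ≤ 2) (n := s)]
    calc Real.sqrt ((2 ^ s + 1 : ℕ)) ≤ Real.sqrt (2 * (2:ℝ) ^ s) := Real.sqrt_le_sqrt e1
      _ = Real.sqrt 2 * Real.sqrt ((2:ℝ) ^ s) := Real.sqrt_mul (by norm_num) _
      _ = Real.sqrt 2 * ((2:ℝ) ^ s) ^ ((1:ℝ)/2) := by rw [Real.sqrt_eq_rpow ((2:ℝ) ^ s)]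
  -- (T/2^s)^β = T^β · (2^s)^(-β)
  have h2 : (T / 2 ^ s) ^ β = T ^ β * ((2:ℝ) ^ s) ^ (-β) := by
    rw [Real.div_rpow (le_of_lt hT) (le_of_lt h2s), Real.rpow_neg (le_of_lt h2s),
      div_eq_mul_inv]
  have h3 : ((2:ℝ) ^ s) ^ ((1:ℝ)/2) * ((2:ℝ) ^ s) ^ (-β)
      = ((2:ℝ) ^ ((1:ℝ)/2 - β)) ^ s := by
    rw [← Real.rpow_natCast ((2:ℝ) ^ ((1:ℝ)/2 - β)) s,
      ← Real.rpow_natCast (2:ℝ) s,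
      ← Real.rpow_mul (by norm_num : (0:ℝ) ≤ 2),
      ← Real.rpow_mul (by norm_num : (0:ℝ) ≤ 2),
      ← Real.rpow_mul (by norm_num : (0:ℝ) ≤ 2),
      ← Real.rpow_add (by norm_num : (0:ℝ) < 2)]
    ring_nf
  have hTb : (0:ℝ) ≤ T ^ β := Real.rpow_nonneg (le_of_lt hT) β
  have hrpos : (0:ℝ) ≤ ((2:ℝ) ^ s) ^ (-β) := Real.rpow_nonneg (le_of_lt h2s) _
  calc Real.sqrt ((2 ^ s + 1 : ℕ)) * (T / 2 ^ s) ^ β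
      ≤ (Real.sqrt 2 * ((2:ℝ) ^ s) ^ ((1:ℝ)/2)) * (T / 2 ^ s) ^ β := by
        apply mul_le_mul_of_nonneg_right h1 (Real.rpow_nonneg (by positivity) _)
    _ = Real.sqrt 2 * T ^ β * (((2:ℝ) ^ s) ^ ((1:ℝ)/2) * ((2:ℝ) ^ s) ^ (-β)) := by
        rw [h2]; ring
    _ = Real.sqrt 2 * T ^ β * ((2:ℝ) ^ ((1:ℝ)/2 - β)) ^ s := by rw [h3]

end Aux7
section Main
variable {N n : ℕ} {p : Finset ℕ → ℝ} {T lam C₁ C₂ C₃ β : ℝ} {Y : ℕ → ℝ → ℝ}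

/-- Increment representation. -/
lemma incr_repr (hd : IsDesign N n p) (hlam : 0 < lam)
    (hA2a : ∀ k ∈ Finset.range N, lam ≤ pi1 N p k)
    {sam : Finset ℕ} (hsam : sam ⊆ Finset.range N) (u v : ℝ) :
    (htMean N p Y sam u - popMean N Y u) - (htMean N p Y sam v - popMean N Y v) =
      (N : ℝ)⁻¹ * ∑ k ∈ Finset.range N,
        ((Y k u - Y k v) / pi1 N p k) * (ind k sam - pi1 N p k) := by
  have hπ : ∀ k ∈ Finset.range N, pi1 N p k ≠ 0 :=
    fun k hk => ne_of_gt (lt_of_lt_of_le hlam (hA2a k hk))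
  rw [ht_repr hπ Y hsam u, ht_repr hπ Y hsam v, ← mul_sub, ← Finset.sum_sub_distrib]
  congr 1
  refine Finset.sum_congr rfl fun k hk => ?_
  field_simp

/-- Second-moment bound for an increment between two time points. -/
lemma incr_momsq (hd : IsDesign N n p) (hT : 0 < T) (hlam : 0 < lam) (hC₁ : 0 < C₁)
    (hA2a : ∀ k ∈ Finset.range N, lam ≤ pi1 N p k)
    (hA2c : ∀ k ∈ Finset.range N, ∀ l ∈ Finset.range N, k ≠ l →
      (n : ℝ) * |Delta N p k l| ≤ C₁)
    (hC₃ : 0 < C₃) (hβ : 1 / 2 < β)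
    (h4b : ∀ u ∈ Set.Icc (0:ℝ) T, ∀ v ∈ Set.Icc (0:ℝ) T,
      (N : ℝ)⁻¹ * ∑ k ∈ Finset.range N, (Y k v - Y k u) ^ 2 ≤ C₃ * |v - u| ^ (2 * β))
    {u v : ℝ} (hu : u ∈ Set.Icc (0:ℝ) T) (hv : v ∈ Set.Icc (0:ℝ) T) :
    (n : ℝ) * dExp N p (fun sam =>
        ((htMean N p Y sam u - popMean N Y u) - (htMean N p Y sam v - popMean N Y v)) ^ 2)
      ≤ ((1 + C₁) / lam ^ 2) * (C₃ * |u - v| ^ (2 * β)) := by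
  have e : dExp N p (fun sam =>
      ((htMean N p Y sam u - popMean N Y u) - (htMean N p Y sam v - popMean N Y v)) ^ 2)
      = dExp N p (fun sam => ((N : ℝ)⁻¹ * ∑ k ∈ Finset.range N,
          ((Y k u - Y k v) / pi1 N p k) * (ind k sam - pi1 N p k)) ^ 2) := by
    refine dExp_congr fun sam hsam => ?_
    rw [incr_repr hd hlam hA2a (Finset.mem_powerset.mp hsam) u v]
  rw [e]
  refine le_trans (var_bound hd hlam hC₁ hA2a hA2c (fun k => Y k u - Y k v)) ?_
  refine mul_le_mul_of_nonneg_left ?_ (by positivity)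
  have := h4b v hv u hu
  simpa using this

/-- Deterministic Hölder bound for an increment. -/
lemma incr_det (hd : IsDesign N n p) (hT : 0 < T) (hlam : 0 < lam)
    (hA2a : ∀ k ∈ Finset.range N, lam ≤ pi1 N p k)
    (hC₃ : 0 < C₃) (hβ : 1 / 2 < β)
    (h4b : ∀ u ∈ Set.Icc (0:ℝ) T, ∀ v ∈ Set.Icc (0:ℝ) T,
      (N : ℝ)⁻¹ * ∑ k ∈ Finset.range N, (Y k v - Y k u) ^ 2 ≤ C₃ * |v - u| ^ (2 * β))
    {sam : Finset ℕ} (hsam : sam ⊆ Finset.range N)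
    {u v : ℝ} (hu : u ∈ Set.Icc (0:ℝ) T) (hv : v ∈ Set.Icc (0:ℝ) T) :
    |(htMean N p Y sam u - popMean N Y u) - (htMean N p Y sam v - popMean N Y v)|
      ≤ (lam⁻¹ * Real.sqrt C₃) * |u - v| ^ β := by
  rw [incr_repr hd hlam hA2a hsam u v]
  refine le_trans (det_bound hd hlam hA2a (fun k => Y k u - Y k v) sam) ?_
  rw [mul_assoc]
  refine mul_le_mul_of_nonneg_left ?_ (by positivity)
  have h1 : (N : ℝ)⁻¹ * ∑ k ∈ Finset.range N, (Y k u - Y k v) ^ 2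
      ≤ C₃ * |u - v| ^ (2 * β) := by
    have := h4b v hv u hu
    simpa using this
  refine le_trans (Real.sqrt_le_sqrt h1) ?_
  rw [Real.sqrt_mul (le_of_lt hC₃)]
  refine mul_le_mul_of_nonneg_left ?_ (Real.sqrt_nonneg _)
  rw [show (2:ℝ) * β = β * 2 by ring, Real.rpow_mul (abs_nonneg _),
    Real.rpow_two, Real.sqrt_sq (Real.rpow_nonneg (abs_nonneg _) β)]

end Main
section Main2
variable {N n : ℕ} {p : Finset ℕ → ℝ} {T lam C₁ C₂ C₃ β : ℝ} {Y : ℕ → ℝ → ℝ}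

lemma per_N_bound (hd : IsDesign N n p) (hT : 0 < T) (hlam : 0 < lam) (hC₁ : 0 < C₁)
    (hA2a : ∀ k ∈ Finset.range N, lam ≤ pi1 N p k)
    (hA2c : ∀ k ∈ Finset.range N, ∀ l ∈ Finset.range N, k ≠ l →
      (n : ℝ) * |Delta N p k l| ≤ C₁)
    (hC₂ : 0 < C₂) (hC₃ : 0 < C₃) (hβ : 1 / 2 < β)
    (h4a : (N : ℝ)⁻¹ * ∑ k ∈ Finset.range N, Y k 0 ^ 2 ≤ C₂)
    (h4b : ∀ u ∈ Set.Icc (0:ℝ) T, ∀ v ∈ Set.Icc (0:ℝ) T,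
      (N : ℝ)⁻¹ * ∑ k ∈ Finset.range N, (Y k v - Y k u) ^ 2 ≤ C₃ * |v - u| ^ (2 * β)) :
    dExp N p (fun sam => Real.sqrt n *
        ⨆ s : Set.Icc (0 : ℝ) T, ⨆ t : Set.Icc (0 : ℝ) T,
          |htMean N p Y sam t - popMean N Y t - htMean N p Y sam s + popMean N Y s|)
      ≤ 2 * ((lam⁻¹ * Real.sqrt C₃) * T ^ β
          + Real.sqrt 2 * Real.sqrt ((1 + C₁) / lam ^ 2 * C₃) * T ^ β *
              (1 / (1 - (2:ℝ) ^ ((1:ℝ)/2 - β)))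
          + Real.sqrt ((1 + C₁) / lam ^ 2 * C₃) * T ^ β) ∧
    Real.sqrt n * dExp N p (fun sam =>
        ⨆ t : Set.Icc (0 : ℝ) T, |htMean N p Y sam t - popMean N Y t|)
      ≤ ((lam⁻¹ * Real.sqrt C₃) * T ^ β
          + Real.sqrt 2 * Real.sqrt ((1 + C₁) / lam ^ 2 * C₃) * T ^ β *
              (1 / (1 - (2:ℝ) ^ ((1:ℝ)/2 - β)))
          + Real.sqrt ((1 + C₁) / lam ^ 2 * C₃) * T ^ β)
        + Real.sqrt ((1 + C₁) / lam ^ 2 * C₂) := by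
  classical
  set Z : Finset ℕ → ℝ → ℝ := fun sam t => htMean N p Y sam t - popMean N Y t with hZ
  set Kdet : ℝ := lam⁻¹ * Real.sqrt C₃ with hKdet
  set KV : ℝ := Real.sqrt ((1 + C₁) / lam ^ 2 * C₃) with hKV
  set r : ℝ := (2:ℝ) ^ ((1:ℝ)/2 - β) with hr
  have hr0 : 0 < r := Real.rpow_pos_of_pos (by norm_num) _
  have hr1 : r < 1 := Real.rpow_lt_one_of_one_lt_of_neg (by norm_num) (by linarith)
  have hβ0 : (0:ℝ) ≤ β := by linarith
  have hKdet0 : 0 ≤ Kdet := by rw [hKdet]; positivity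
  have hKV0 : 0 ≤ KV := Real.sqrt_nonneg _
  have hTβ : (0:ℝ) ≤ T ^ β := Real.rpow_nonneg (le_of_lt hT) _
  set M : ℕ := n with hM
  -- grid increments
  set D : ℕ → ℕ → Finset ℕ → ℝ := fun m j sam =>
    Z sam (gridPt T (m+1) j) - Z sam (gridPt T m (j/2)) with hD
  have hne : ∀ m : ℕ, (Finset.range (2^(m+1)+1)).Nonempty :=
    fun m => ⟨0, Finset.mem_range.mpr (Nat.succ_pos _)⟩
  set Cmax : ℕ → Finset ℕ → ℝ := fun m sam =>
    (Finset.range (2^(m+1)+1)).sup' (hne m) (fun j => |D m j sam|) with hCmax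
  set B0 : Finset ℕ → ℝ := fun sam => |Z sam T - Z sam 0| with hB0
  set Gb : Finset ℕ → ℝ := fun sam =>
    Kdet * (T/2^M) ^ β + (∑ m ∈ Finset.range M, Cmax m sam) + B0 sam with hGb
  have hT0 : (0:ℝ) ∈ Set.Icc (0:ℝ) T := ⟨le_refl _, le_of_lt hT⟩
  have hTT : T ∈ Set.Icc (0:ℝ) T := ⟨le_of_lt hT, le_refl _⟩
  -- nonnegativity of Cmax and Gb
  have hCmax0 : ∀ m sam, 0 ≤ Cmax m sam := by
    intro m sam
    refine le_trans (abs_nonneg (D m 0 sam)) ?_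
    exact Finset.le_sup' (fun j => |D m j sam|) (Finset.mem_range.mpr (Nat.succ_pos _))
  have hGb0 : ∀ sam, 0 ≤ Gb sam := by
    intro sam
    have h1 : 0 ≤ Kdet * (T/2^M) ^ β := by positivity
    have h2 : 0 ≤ ∑ m ∈ Finset.range M, Cmax m sam :=
      Finset.sum_nonneg fun m _ => hCmax0 m sam
    have h3 : 0 ≤ B0 sam := abs_nonneg _
    rw [hGb]; dsimp only; linarith
  -- CLAIM A : pointwise chaining bound
  have claimA : ∀ sam ∈ (Finset.range N).powerset, ∀ t ∈ Set.Icc (0:ℝ) T,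
      |Z sam t - Z sam 0| ≤ Gb sam := by
    intro sam hsam t ht
    have hsub := Finset.mem_powerset.mp hsam
    set g : ℕ → ℝ := fun m => gridPt T m (gridIdx T m t) with hg
    have hgmem : ∀ m, g m ∈ Set.Icc 0 T :=
      fun m => gridPt_mem hT (gridIdx_le hT ht)
    -- term 1 : |Z t - Z (g M)|
    have ht1 : |Z sam t - Z sam (g M)| ≤ Kdet * (T/2^M) ^ β := by
      refine le_trans (incr_det hd hT hlam hA2a hC₃ hβ h4b hsub ht (hgmem M)) ?_
      refine mul_le_mul_of_nonneg_left ?_ hKdet0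
      refine Real.rpow_le_rpow (abs_nonneg _) ?_ hβ0
      exact gridIdx_approx hT ht
    -- term 2 : telescope
    have ht2 : |Z sam (g M) - Z sam (g 0)| ≤ ∑ m ∈ Finset.range M, Cmax m sam := by
      have tel : Z sam (g M) - Z sam (g 0)
          = ∑ m ∈ Finset.range M, (Z sam (g (m+1)) - Z sam (g m)) :=
        (Finset.sum_range_sub (fun m => Z sam (g m)) M).symm
      rw [tel]
      refine le_trans (Finset.abs_sum_le_sum_abs _ _) (Finset.sum_le_sum fun m _ => ?_)
      have hidx : gridIdx T (m+1) t ∈ Finset.range (2^(m+1)+1) :=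
        Finset.mem_range.mpr (Nat.lt_succ_of_le (gridIdx_le hT ht))
      have e : Z sam (g (m+1)) - Z sam (g m) = D m (gridIdx T (m+1) t) sam := by
        rw [hD]
        dsimp only
        rw [hg]
        dsimp only
        rw [gridIdx_succ hT (m := m) (t := t)]
      rw [e]
      exact Finset.le_sup' (fun j => |D m j sam|) hidx
    -- term 3 : base
    have ht3 : |Z sam (g 0) - Z sam 0| ≤ B0 sam := by
      rcases gridPt_zero_cases hT ht with h | h
      · rw [hg]; dsimp only; rw [h]
        simp [hB0]
      · rw [hg]; dsimp only; rw [h]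
    calc |Z sam t - Z sam 0|
        ≤ |Z sam t - Z sam (g M)| + |Z sam (g M) - Z sam (g 0)| + |Z sam (g 0) - Z sam 0| := by
          have := abs_sub_le (Z sam t) (Z sam (g M)) (Z sam 0)
          have h2 := abs_sub_le (Z sam (g M)) (Z sam (g 0)) (Z sam 0)
          linarith
      _ ≤ Gb sam := by rw [hGb]; dsimp only; linarith
  -- CLAIM B : expectation bounds for the pieces
  -- (i) base increment
  have hB0exp : Real.sqrt n * dExp N p B0 ≤ KV * T ^ β := by
    have h1 : dExp N p B0 ≤ Real.sqrt (dExp N p (fun sam => (Z sam T - Z sam 0) ^ 2)) :=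
      dExp_abs_le_sqrt hd _
    have h2 : (n:ℝ) * dExp N p (fun sam => (Z sam T - Z sam 0) ^ 2)
        ≤ ((1 + C₁) / lam ^ 2) * (C₃ * |T - 0| ^ (2*β)) :=
      incr_momsq hd hT hlam hC₁ hA2a hA2c hC₃ hβ h4b hTT hT0
    have h3 : Real.sqrt n * dExp N p B0
        ≤ Real.sqrt ((n:ℝ) * dExp N p (fun sam => (Z sam T - Z sam 0) ^ 2)) := by
      rw [Real.sqrt_mul (Nat.cast_nonneg n)]
      exact mul_le_mul_of_nonneg_left h1 (Real.sqrt_nonneg _)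
    refine le_trans h3 (le_trans (Real.sqrt_le_sqrt h2) ?_)
    rw [show ((1 + C₁) / lam ^ 2) * (C₃ * |T - 0| ^ (2*β))
        = ((1 + C₁) / lam ^ 2 * C₃) * |T - 0| ^ (2*β) by ring]
    rw [Real.sqrt_mul (by positivity), ← hKV]
    refine mul_le_mul_of_nonneg_left ?_ hKV0
    rw [sub_zero, abs_of_pos hT, show (2:ℝ) * β = β * 2 by ring,
      Real.rpow_mul (le_of_lt hT), Real.rpow_two,
      Real.sqrt_sq (Real.rpow_nonneg (le_of_lt hT) β)]
  -- (ii) chain maxima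
  have hCexp : ∀ m : ℕ, Real.sqrt n * dExp N p (Cmax m)
      ≤ Real.sqrt 2 * KV * T ^ β * r ^ (m+1) := by
    intro m
    set A := Finset.range (2^(m+1)+1) with hA
    set S : Finset ℕ → ℝ := fun sam => ∑ j ∈ A, (D m j sam) ^ 2 with hS
    have hS0 : ∀ sam, 0 ≤ S sam := fun sam => Finset.sum_nonneg fun j _ => sq_nonneg _
    have h1 : dExp N p (Cmax m) ≤ dExp N p (fun sam => Real.sqrt (S sam)) :=
      dExp_mono hd fun sam _ _ => sup'_abs_le_sqrt_sum (hne m) _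
    have h2 : dExp N p (fun sam => Real.sqrt (S sam)) ≤ Real.sqrt (dExp N p S) := by
      have e : dExp N p (fun sam => Real.sqrt (S sam))
          = dExp N p (fun sam => |Real.sqrt (S sam)|) :=
        dExp_congr fun sam _ => (abs_of_nonneg (Real.sqrt_nonneg _)).symm
      have e2 : dExp N p (fun sam => Real.sqrt (S sam) ^ 2) = dExp N p S :=
        dExp_congr fun sam _ => Real.sq_sqrt (hS0 sam)
      rw [e, ← e2]
      exact dExp_abs_le_sqrt hd _
    have h3 : (n:ℝ) * dExp N p S
        ≤ ((2^(m+1)+1 : ℕ) : ℝ) * (((1 + C₁) / lam ^ 2 * C₃) * (T / 2^(m+1)) ^ (2*β)) := by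
      rw [hS]
      rw [dExp_sum, Finset.mul_sum]
      have hbound : ∀ j ∈ A, (n:ℝ) * dExp N p (fun sam => (D m j sam)^2)
          ≤ ((1 + C₁) / lam ^ 2 * C₃) * (T / 2^(m+1)) ^ (2*β) := by
        intro j hj
        have hj' : j ≤ 2^(m+1) := Nat.lt_succ_iff.mp (Finset.mem_range.mp hj)
        have hj2 : j / 2 ≤ 2^m := by
          calc j / 2 ≤ 2^(m+1)/2 := Nat.div_le_div_right hj'
            _ = 2^m := by omega
        have hu : gridPt T (m+1) j ∈ Set.Icc (0:ℝ) T := gridPt_mem hT hj'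
        have hv : gridPt T m (j/2) ∈ Set.Icc (0:ℝ) T := gridPt_mem hT hj2
        have key := incr_momsq hd hT hlam hC₁ hA2a hA2c hC₃ hβ h4b hu hv
        refine le_trans key ?_
        rw [show ((1 + C₁) / lam ^ 2) * (C₃ * |gridPt T (m+1) j - gridPt T m (j/2)| ^ (2*β))
            = ((1 + C₁) / lam ^ 2 * C₃) * |gridPt T (m+1) j - gridPt T m (j/2)| ^ (2*β)
            by ring]
        refine mul_le_mul_of_nonneg_left ?_ (by positivity)
        refine Real.rpow_le_rpow (abs_nonneg _) ?_ (by linarith)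
        exact gridPt_pair hT
      calc ∑ j ∈ A, (n:ℝ) * dExp N p (fun sam => (D m j sam)^2)
          ≤ ∑ j ∈ A, ((1 + C₁) / lam ^ 2 * C₃) * (T / 2^(m+1)) ^ (2*β) :=
            Finset.sum_le_sum hbound
        _ = ((2^(m+1)+1 : ℕ) : ℝ) * (((1 + C₁) / lam ^ 2 * C₃) * (T / 2^(m+1)) ^ (2*β)) := by
            rw [Finset.sum_const, hA, Finset.card_range, nsmul_eq_mul]
    have h4 : Real.sqrt n * dExp N p (Cmax m) ≤ Real.sqrt ((n:ℝ) * dExp N p S) := by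
      rw [Real.sqrt_mul (Nat.cast_nonneg n)]
      exact mul_le_mul_of_nonneg_left (le_trans h1 h2) (Real.sqrt_nonneg _)
    refine le_trans h4 (le_trans (Real.sqrt_le_sqrt h3) ?_)
    rw [Real.sqrt_mul (Nat.cast_nonneg _), Real.sqrt_mul (by positivity)]
    have e5 : Real.sqrt ((T / 2^(m+1)) ^ (2*β)) = (T / 2^(m+1)) ^ β := by
      rw [show (2:ℝ) * β = β * 2 by ring, Real.rpow_mul (by positivity), Real.rpow_two,
        Real.sqrt_sq (Real.rpow_nonneg (by positivity) β)]
    rw [e5, ← hKV]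
    have := chain_scale_bound hβ hT (m+1)
    calc Real.sqrt ((2^(m+1)+1 : ℕ)) * (KV * (T / 2^(m+1)) ^ β)
        = KV * (Real.sqrt ((2^(m+1)+1 : ℕ)) * (T / 2^(m+1)) ^ β) := by ring
      _ ≤ KV * (Real.sqrt 2 * T ^ β * r ^ (m+1)) :=
          mul_le_mul_of_nonneg_left this hKV0
      _ = Real.sqrt 2 * KV * T ^ β * r ^ (m+1) := by ring
  -- (iii) deterministic term scaled by sqrt n
  have hdetn : Real.sqrt n * (Kdet * (T/2^M) ^ β) ≤ Kdet * T ^ β := by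
    have h2M : (0:ℝ) < (2:ℝ)^M := by positivity
    have e : (T / 2^M) ^ β = T ^ β * ((2:ℝ)^M) ^ (-β) := by
      rw [Real.div_rpow (le_of_lt hT) (le_of_lt h2M), Real.rpow_neg (le_of_lt h2M),
        div_eq_mul_inv]
    have h5 : Real.sqrt n * ((2:ℝ)^M) ^ (-β) ≤ 1 := by
      rw [Real.rpow_neg (le_of_lt h2M)]
      have hpow : (0:ℝ) < ((2:ℝ)^M) ^ β := Real.rpow_pos_of_pos h2M _
      rw [mul_inv_le_iff₀ hpow, one_mul]
      exact sqrt_nat_le_two_pow_rpow hβ n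
    calc Real.sqrt n * (Kdet * (T/2^M) ^ β)
        = (Kdet * T ^ β) * (Real.sqrt n * ((2:ℝ)^M) ^ (-β)) := by rw [e]; ring
      _ ≤ (Kdet * T ^ β) * 1 :=
          mul_le_mul_of_nonneg_left h5 (by positivity)
      _ = Kdet * T ^ β := mul_one _
  -- expectation of Gb
  have hGbexp : Real.sqrt n * dExp N p Gb
      ≤ Kdet * T ^ β + Real.sqrt 2 * KV * T ^ β * (1 / (1 - r)) + KV * T ^ β := by
    have e : dExp N p Gb = Kdet * (T/2^M) ^ β
        + (∑ m ∈ Finset.range M, dExp N p (Cmax m)) + dExp N p B0 := by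
      rw [hGb]
      rw [show (fun sam => Kdet * (T/2^M) ^ β
          + (∑ m ∈ Finset.range M, Cmax m sam) + B0 sam)
        = (fun sam => (Kdet * (T/2^M) ^ β
          + (∑ m ∈ Finset.range M, Cmax m sam)) + B0 sam) from rfl]
      rw [dExp_add, dExp_add, dExp_const hd, dExp_sum]
    have hsum : Real.sqrt n * ∑ m ∈ Finset.range M, dExp N p (Cmax m)
        ≤ Real.sqrt 2 * KV * T ^ β * (1 / (1 - r)) := by
      rw [Finset.mul_sum]
      calc ∑ m ∈ Finset.range M, Real.sqrt n * dExp N p (Cmax m)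
          ≤ ∑ m ∈ Finset.range M, Real.sqrt 2 * KV * T ^ β * r ^ (m+1) :=
            Finset.sum_le_sum fun m _ => hCexp m
        _ = (Real.sqrt 2 * KV * T ^ β) * ∑ m ∈ Finset.range M, r ^ (m+1) := by
            rw [Finset.mul_sum]
        _ ≤ (Real.sqrt 2 * KV * T ^ β) * (1 / (1 - r)) := by
            refine mul_le_mul_of_nonneg_left
              (geom_tail_sum_le (le_of_lt hr0) hr1 M) (by positivity)
        _ = Real.sqrt 2 * KV * T ^ β * (1 / (1 - r)) := by ring
    rw [e, mul_add, mul_add]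
    exact add_le_add (add_le_add hdetn hsum) hB0exp
  constructor
  · -- first statement
    have hmono : dExp N p (fun sam => Real.sqrt n *
        ⨆ s : Set.Icc (0 : ℝ) T, ⨆ t : Set.Icc (0 : ℝ) T,
          |htMean N p Y sam t - popMean N Y t - htMean N p Y sam s + popMean N Y s|)
        ≤ dExp N p (fun sam => Real.sqrt n * (2 * Gb sam)) := by
      refine dExp_mono hd fun sam hsam _ => ?_
      refine mul_le_mul_of_nonneg_left ?_ (Real.sqrt_nonneg _)
      have hG2 : 0 ≤ 2 * Gb sam := by linarith [hGb0 sam]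
      refine Real.iSup_le (fun s => Real.iSup_le (fun t => ?_) hG2) hG2
      have e : htMean N p Y sam ↑t - popMean N Y ↑t - htMean N p Y sam ↑s + popMean N Y ↑s
          = (Z sam ↑t - Z sam 0) - (Z sam ↑s - Z sam 0) := by rw [hZ]; ring
      rw [e]
      have h1 := claimA sam hsam ↑t t.2
      have h2 := claimA sam hsam ↑s s.2
      calc |(Z sam ↑t - Z sam 0) - (Z sam ↑s - Z sam 0)|
          ≤ |Z sam ↑t - Z sam 0| + |Z sam ↑s - Z sam 0| := abs_sub _ _
        _ ≤ 2 * Gb sam := by linarith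
    refine le_trans hmono ?_
    have e2 : dExp N p (fun sam => Real.sqrt n * (2 * Gb sam))
        = 2 * (Real.sqrt n * dExp N p Gb) := by
      rw [show (fun sam => Real.sqrt n * (2 * Gb sam))
          = (fun sam => (Real.sqrt n * 2) * Gb sam) from funext fun sam => by ring]
      rw [dExp_const_mul]; ring
    rw [e2]
    linarith [hGbexp]
  · -- second statement
    have hZ0exp : Real.sqrt n * dExp N p (fun sam => |Z sam 0|)
        ≤ Real.sqrt ((1 + C₁) / lam ^ 2 * C₂) := by
      have h1 : dExp N p (fun sam => |Z sam 0|)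
          ≤ Real.sqrt (dExp N p (fun sam => (Z sam 0) ^ 2)) := dExp_abs_le_sqrt hd _
      have h2 : (n:ℝ) * dExp N p (fun sam => (Z sam 0) ^ 2)
          ≤ ((1 + C₁) / lam ^ 2) * ((N : ℝ)⁻¹ * ∑ k ∈ Finset.range N, Y k 0 ^ 2) := by
        have e : dExp N p (fun sam => (Z sam 0) ^ 2)
            = dExp N p (fun sam => ((N : ℝ)⁻¹ * ∑ k ∈ Finset.range N,
                (Y k 0 / pi1 N p k) * (ind k sam - pi1 N p k)) ^ 2) := by
          refine dExp_congr fun sam hsam => ?_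
          congr 1
          have hπ : ∀ k ∈ Finset.range N, pi1 N p k ≠ 0 :=
            fun k hk => ne_of_gt (lt_of_lt_of_le hlam (hA2a k hk))
          exact ht_repr hπ Y (Finset.mem_powerset.mp hsam) 0
        rw [e]
        exact var_bound hd hlam hC₁ hA2a hA2c (fun k => Y k 0)
      have h3 : Real.sqrt n * dExp N p (fun sam => |Z sam 0|)
          ≤ Real.sqrt ((n:ℝ) * dExp N p (fun sam => (Z sam 0) ^ 2)) := by
        rw [Real.sqrt_mul (Nat.cast_nonneg n)]
        exact mul_le_mul_of_nonneg_left h1 (Real.sqrt_nonneg _)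
      refine le_trans h3 (le_trans (Real.sqrt_le_sqrt h2) (Real.sqrt_le_sqrt ?_))
      have : (N : ℝ)⁻¹ * ∑ k ∈ Finset.range N, Y k 0 ^ 2 ≤ C₂ := h4a
      have hpos : (0:ℝ) ≤ (1 + C₁) / lam ^ 2 := by positivity
      calc ((1 + C₁) / lam ^ 2) * ((N : ℝ)⁻¹ * ∑ k ∈ Finset.range N, Y k 0 ^ 2)
          ≤ ((1 + C₁) / lam ^ 2) * C₂ := mul_le_mul_of_nonneg_left this hpos
        _ = (1 + C₁) / lam ^ 2 * C₂ := rfl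
    have hmono2 : dExp N p (fun sam =>
          ⨆ t : Set.Icc (0 : ℝ) T, |htMean N p Y sam t - popMean N Y t|)
        ≤ dExp N p (fun sam => Gb sam + |Z sam 0|) := by
      refine dExp_mono hd fun sam hsam _ => ?_
      have hG0 : 0 ≤ Gb sam + |Z sam 0| := by
        have := hGb0 sam; have := abs_nonneg (Z sam 0); linarith
      refine Real.iSup_le (fun t => ?_) hG0
      have e : htMean N p Y sam ↑t - popMean N Y ↑t = (Z sam ↑t - Z sam 0) + Z sam 0 := by
        rw [hZ]; ring
      rw [e]
      have h1 := claimA sam hsam ↑t t.2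
      calc |(Z sam ↑t - Z sam 0) + Z sam 0| ≤ |Z sam ↑t - Z sam 0| + |Z sam 0| := abs_add_le _ _
        _ ≤ Gb sam + |Z sam 0| := by linarith
    have step : Real.sqrt n * dExp N p (fun sam =>
          ⨆ t : Set.Icc (0 : ℝ) T, |htMean N p Y sam t - popMean N Y t|)
        ≤ Real.sqrt n * dExp N p (fun sam => Gb sam + |Z sam 0|) :=
      mul_le_mul_of_nonneg_left hmono2 (Real.sqrt_nonneg _)
    refine le_trans step ?_
    rw [dExp_add]
    rw [mul_add]
    have := hGbexp
    have := hZ0exp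
    linarith
end Main2

/-- under Assumptions 1–4 there is a constant `C₈` bounding, uniformly in `N`,
`E[√n · sup_{(s,t)} |μ̂_N(t) - μ_N(t) - μ̂_N(s) + μ_N(s)|]`; consequently
`√n · E[sup_t |μ̂_N(t) - μ_N(t)|]` is bounded uniformly in `N`. -/
theorem sup_increment_moment_bound
    (T πlim lam lamstar C₁ C₂ C₃ β : ℝ) (μ : ℝ → ℝ)
    (Y : ℕ → ℝ → ℝ) (nseq : ℕ → ℕ) (p : ℕ → Finset ℕ → ℝ)
    (hT : 0 < T)
    (hdes : ∀ N, IsDesign N (nseq N) (p N))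
    -- Assumption 1
    (hA1 : Tendsto (fun N => (nseq N : ℝ) / (N : ℝ)) atTop (𝓝 πlim))
    (hπ0 : 0 < πlim) (hπ1 : πlim < 1)
    -- Assumption 2
    (hlam : 0 < lam)
    (hA2a : ∀ N, ∀ k ∈ Finset.range N, lam ≤ pi1 N (p N) k)
    (hlamstar : 0 < lamstar)
    (hA2b : ∀ N, ∀ k ∈ Finset.range N, ∀ l ∈ Finset.range N, k ≠ l →
      lamstar ≤ pi2 N (p N) k l)
    (hC₁ : 0 < C₁)
    (hA2c : ∀ N, ∀ k ∈ Finset.range N, ∀ l ∈ Finset.range N, k ≠ l →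
      (nseq N : ℝ) * |Delta N (p N) k l| ≤ C₁)
    -- Assumption 3
    (hA3a : ∀ k, ContinuousOn (Y k) (Set.Icc 0 T))
    (hA3b : ContinuousOn μ (Set.Icc 0 T))
    (hA3c : TendstoUniformlyOn (fun N t => popMean N Y t) μ atTop (Set.Icc 0 T))
    -- Assumption 4
    (hβ : 1 / 2 < β) (hC₂ : 0 < C₂) (hC₃ : 0 < C₃)
    (hA4a : ∀ N : ℕ, (N : ℝ)⁻¹ * ∑ k ∈ Finset.range N, Y k 0 ^ 2 < C₂)
    (hA4b : ∀ N : ℕ, ∀ s ∈ Set.Icc (0 : ℝ) T, ∀ t ∈ Set.Icc (0 : ℝ) T,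
      (N : ℝ)⁻¹ * ∑ k ∈ Finset.range N, (Y k t - Y k s) ^ 2 ≤ C₃ * |t - s| ^ (2 * β))
    :
    (∃ C₈ : ℝ, 0 < C₈ ∧ ∀ N,
        dExp N (p N) (fun sam => Real.sqrt (nseq N) *
          ⨆ s : Set.Icc (0 : ℝ) T, ⨆ t : Set.Icc (0 : ℝ) T,
            |htMean N (p N) Y sam t - popMean N Y t
              - htMean N (p N) Y sam s + popMean N Y s|) ≤ C₈) ∧
    ∃ C : ℝ, 0 < C ∧ ∀ N,
      Real.sqrt (nseq N) * dExp N (p N) (fun sam =>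
          ⨆ t : Set.Icc (0 : ℝ) T, |htMean N (p N) Y sam t - popMean N Y t|) ≤ C := by
  set E : ℝ := (lam⁻¹ * Real.sqrt C₃) * T ^ β
      + Real.sqrt 2 * Real.sqrt ((1 + C₁) / lam ^ 2 * C₃) * T ^ β *
          (1 / (1 - (2:ℝ) ^ ((1:ℝ)/2 - β)))
      + Real.sqrt ((1 + C₁) / lam ^ 2 * C₃) * T ^ β with hE
  have hr1 : (2:ℝ) ^ ((1:ℝ)/2 - β) < 1 :=
    Real.rpow_lt_one_of_one_lt_of_neg (by norm_num) (by linarith)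
  have hE0 : 0 ≤ E := by
    have h1 : (0:ℝ) ≤ T ^ β := Real.rpow_nonneg (le_of_lt hT) _
    have h2 : (0:ℝ) ≤ 1 / (1 - (2:ℝ) ^ ((1:ℝ)/2 - β)) := by
      have : (0:ℝ) < 1 - (2:ℝ) ^ ((1:ℝ)/2 - β) := by linarith
      positivity
    rw [hE]
    have h3 : (0:ℝ) ≤ lam⁻¹ * Real.sqrt C₃ := by positivity
    have h4 : (0:ℝ) ≤ Real.sqrt ((1 + C₁) / lam ^ 2 * C₃) := Real.sqrt_nonneg _
    have h5 : (0:ℝ) ≤ Real.sqrt 2 := Real.sqrt_nonneg _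
    nlinarith [mul_nonneg (mul_nonneg (mul_nonneg h5 h4) h1) h2, mul_nonneg h3 h1,
      mul_nonneg h4 h1]
  have key : ∀ N, dExp N (p N) (fun sam => Real.sqrt (nseq N) *
        ⨆ s : Set.Icc (0 : ℝ) T, ⨆ t : Set.Icc (0 : ℝ) T,
          |htMean N (p N) Y sam t - popMean N Y t
            - htMean N (p N) Y sam s + popMean N Y s|) ≤ 2 * E ∧
      Real.sqrt (nseq N) * dExp N (p N) (fun sam =>
          ⨆ t : Set.Icc (0 : ℝ) T, |htMean N (p N) Y sam t - popMean N Y t|)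
        ≤ E + Real.sqrt ((1 + C₁) / lam ^ 2 * C₂) := fun N =>
    per_N_bound (hdes N) hT hlam hC₁ (hA2a N) (hA2c N) hC₂ hC₃ hβ
      (le_of_lt (hA4a N)) (fun u hu v hv => hA4b N u hu v hv)
  clear_value E
  constructor
  · exact ⟨2 * E + 1, by linarith, fun N => by linarith [(key N).1]⟩
  · refine ⟨E + Real.sqrt ((1 + C₁) / lam ^ 2 * C₂) + 1, ?_, fun N => by linarith [(key N).2]⟩
    have h9 := Real.sqrt_nonneg ((1 + C₁) / lam ^ 2 * C₂)
    nlinarith [hE0, h9]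

end
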